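/- arXiv:1209.3907 — 4 statements merged into one kernel-verified Lean document; each statement's English description precedes it below -/
import Mathlib

section
/- Fix α ≥ 1. For a skew-Hermitian n×n complex matrix a with eigenvalues √-1 λ₁, …, √-1 λₙ (λⱼ real), define ψ_α(a) = Σⱼ |λⱼ|^α. Then ψ_α is a convex function on the real vector space of skew-Hermitian matrices: ψ_α(t a + (1-t) b) ≤ t ψ_α(a) + (1-t) ψ_α(b) for all skew-Hermitian a, b and t ∈ [0,1]. -/
open Matrix Finset

lemma convf {α : ℝ} (hα : 1 ≤ α) : ConvexOn ℝ Set.univ (fun x : ℝ => |x| ^ α) := by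
  have himg : (fun x : ℝ => |x|) '' Set.univ = Set.Ici 0 := by
    ext y; constructor
    · rintro ⟨x, -, rfl⟩; exact abs_nonneg x
    · intro hy; exact ⟨y, Set.mem_univ _, abs_of_nonneg hy⟩
  have habs : ConvexOn ℝ Set.univ (fun x : ℝ => |x|) := by
    refine ⟨convex_univ, fun x _ y _ s u hs hu hsu => ?_⟩
    calc |s • x + u • y| ≤ |s • x| + |u • y| := abs_add_le _ _
      _ = s • |x| + u • |y| := by
          simp [abs_mul, abs_of_nonneg hs, abs_of_nonneg hu]
  have := (ConvexOn.comp (g := fun x : ℝ => x ^ α) (by rw [himg]; exact convexOn_rpow hα)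
    habs (by rw [himg]; exact fun x hx y hy hxy => Real.rpow_le_rpow hx hxy (le_trans zero_le_one hα)))
  exact this
lemma peierls {n : ℕ} {f : ℝ → ℝ} (hf : ConvexOn ℝ Set.univ f)
    {A : Matrix (Fin n) (Fin n) ℂ} (hA : A.IsHermitian)
    (U : Matrix.unitaryGroup (Fin n) ℂ) :
    ∑ j, f (((star (U : Matrix (Fin n) (Fin n) ℂ)) * A * (U : Matrix (Fin n) (Fin n) ℂ)) j j).re
      ≤ ∑ k, f (hA.eigenvalues k) := by
  set V : Matrix (Fin n) (Fin n) ℂ := ↑hA.eigenvectorUnitary with hV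
  set W : Matrix (Fin n) (Fin n) ℂ := star V * (U : Matrix (Fin n) (Fin n) ℂ) with hW
  have hVsV : star V * V = 1 := Unitary.coe_star_mul_self hA.eigenvectorUnitary
  have hVVs : V * star V = 1 := Unitary.coe_mul_star_self hA.eigenvectorUnitary
  have hUsU : star (U : Matrix (Fin n) (Fin n) ℂ) * U = 1 := Unitary.coe_star_mul_self U
  have hUUs : (U : Matrix (Fin n) (Fin n) ℂ) * star (U : Matrix (Fin n) (Fin n) ℂ) = 1 :=
    Unitary.coe_mul_star_self U
  have hWsW : star W * W = 1 := by
    rw [hW, Matrix.star_mul, star_star, Matrix.mul_assoc, ← Matrix.mul_assoc V, hVVs, one_mul,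
      hUsU]
  have hWWs : W * star W = 1 := by
    rw [hW, Matrix.star_mul, star_star, Matrix.mul_assoc, ← Matrix.mul_assoc _ (star _), hUUs,
      one_mul, hVsV]
  have key : star (U : Matrix (Fin n) (Fin n) ℂ) * A * U
      = star W * diagonal (Complex.ofReal ∘ hA.eigenvalues) * W := by
    conv_lhs => rw [hA.spectral_theorem, Unitary.conjStarAlgAut_apply]
    rw [hW]
    simp only [← hV, Matrix.star_mul, star_star, Matrix.mul_assoc]
    rfl
  -- column sums of |W|² are 1
  have hcol : ∀ j, ∑ k, Complex.normSq (W k j) = 1 := by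
    intro j
    have h1 : (star W * W) j j = 1 := by rw [hWsW]; simp
    rw [Matrix.mul_apply] at h1
    simp only [star_apply, RCLike.star_def] at h1
    have : ∑ k, (Complex.normSq (W k j) : ℂ) = 1 := by
      rw [← h1]
      exact Finset.sum_congr rfl fun k _ => Complex.normSq_eq_conj_mul_self
    exact_mod_cast this
  -- row sums of |W|² are 1
  have hrow : ∀ k, ∑ j, Complex.normSq (W k j) = 1 := by
    intro k
    have h1 : (W * star W) k k = 1 := by rw [hWWs]; simp
    rw [Matrix.mul_apply] at h1
    simp only [star_apply, RCLike.star_def] at h1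
    have : ∑ j, (Complex.normSq (W k j) : ℂ) = 1 := by
      rw [← h1]
      refine Finset.sum_congr rfl fun j _ => ?_
      rw [mul_comm]
      exact Complex.normSq_eq_conj_mul_self
    exact_mod_cast this
  -- diagonal entries
  have entry : ∀ j, ((star (U : Matrix (Fin n) (Fin n) ℂ) * A * (U : Matrix (Fin n) (Fin n) ℂ)) j j).re
      = ∑ k, Complex.normSq (W k j) * hA.eigenvalues k := by
    intro j
    rw [key]
    have h2 : (star W * diagonal (Complex.ofReal ∘ hA.eigenvalues) * W) j j
        = ∑ k, ((Complex.normSq (W k j) * hA.eigenvalues k : ℝ) : ℂ) := by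
      simp only [Matrix.mul_apply, Matrix.diagonal_apply, star_apply, RCLike.star_def,
        Finset.sum_mul, mul_ite, ite_mul, zero_mul, mul_zero, Finset.sum_ite_eq, Finset.sum_ite_eq',
        Finset.mem_univ, if_true]
      refine Finset.sum_congr rfl fun k _ => ?_
      rw [show (starRingEnd ℂ) (W k j) * (Complex.ofReal ∘ hA.eigenvalues) k * W k j
          = ((starRingEnd ℂ) (W k j) * W k j) * (hA.eigenvalues k : ℂ) by
        simp [Function.comp]; ring]
      rw [← Complex.normSq_eq_conj_mul_self]
      push_cast
      ring
    rw [h2, Complex.re_sum]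
    simp
  -- Jensen pointwise + swap sums
  calc ∑ j, f (((star (U : Matrix (Fin n) (Fin n) ℂ)) * A * (U : Matrix (Fin n) (Fin n) ℂ)) j j).re
      ≤ ∑ j, ∑ k, Complex.normSq (W k j) * f (hA.eigenvalues k) := by
        refine Finset.sum_le_sum fun j _ => ?_
        rw [entry j]
        exact hf.map_sum_le (fun k _ => Complex.normSq_nonneg _) (hcol j)
          (fun k _ => Set.mem_univ _)
    _ = ∑ k, f (hA.eigenvalues k) := by
        rw [Finset.sum_comm]
        refine Finset.sum_congr rfl fun k _ => ?_
        rw [← Finset.sum_mul, hrow k, one_mul]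

/-- ψ_α(a) = Σ |λ_j|^α is convex on skew-Hermitian matrices, where
√-1 λ_j are the eigenvalues of a (so λ_j are the eigenvalues of the
Hermitian matrix i·a). -/
theorem stmt_3 {n : ℕ} (α : ℝ) (hα : 1 ≤ α)
    (a b : Matrix (Fin n) (Fin n) ℂ)
    (ha : aᴴ = -a) (hb : bᴴ = -b)
    (hA : (Complex.I • a).IsHermitian) (hB : (Complex.I • b).IsHermitian)
    (t : ℝ) (ht0 : 0 ≤ t) (ht1 : t ≤ 1)
    (hC : (Complex.I • (t • a + (1 - t) • b)).IsHermitian) :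
    ∑ j, |hC.eigenvalues j| ^ α ≤
      t * ∑ j, |hA.eigenvalues j| ^ α + (1 - t) * ∑ j, |hB.eigenvalues j| ^ α := by
  have hf : ConvexOn ℝ Set.univ (fun x : ℝ => |x| ^ α) := convf hα
  set A : Matrix (Fin n) (Fin n) ℂ := Complex.I • a with hAdef
  set B : Matrix (Fin n) (Fin n) ℂ := Complex.I • b with hBdef
  set C : Matrix (Fin n) (Fin n) ℂ := Complex.I • (t • a + (1 - t) • b) with hCdef
  have hCAB : C = t • A + (1 - t) • B := by
    rw [hCdef, hAdef, hBdef, smul_add, smul_comm, smul_comm Complex.I]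
  set U := hC.eigenvectorUnitary with hU
  have hdiag : star (U : Matrix (Fin n) (Fin n) ℂ) * C * (U : Matrix (Fin n) (Fin n) ℂ)
      = diagonal (RCLike.ofReal ∘ hC.eigenvalues) := by
    conv_lhs => rw [hC.spectral_theorem, Unitary.conjStarAlgAut_apply]
    rw [← hU]
    simp only [Matrix.mul_assoc, Unitary.coe_star_mul_self, Matrix.mul_one]
    simp only [← Matrix.mul_assoc, Unitary.coe_star_mul_self, Matrix.one_mul]
  -- eigenvalues of C as convex combinations
  have hlam : ∀ j, hC.eigenvalues j
      = t * ((star (U : Matrix (Fin n) (Fin n) ℂ) * A * (U : Matrix (Fin n) (Fin n) ℂ)) j j).re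
        + (1 - t) * ((star (U : Matrix (Fin n) (Fin n) ℂ) * B * (U : Matrix (Fin n) (Fin n) ℂ)) j j).re := by
    intro j
    have h1 : star (U : Matrix (Fin n) (Fin n) ℂ) * C * (U : Matrix (Fin n) (Fin n) ℂ)
        = t • (star (U : Matrix (Fin n) (Fin n) ℂ) * A * U)
          + (1 - t) • (star (U : Matrix (Fin n) (Fin n) ℂ) * B * U) := by
      rw [hCAB]
      simp only [Matrix.mul_add, Matrix.add_mul, Matrix.mul_smul, Matrix.smul_mul]
    have h2 := congrArg (fun M => (M j j).re) (h1.symm.trans hdiag)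
    simp only [Matrix.add_apply, Matrix.smul_apply, Complex.add_re, Complex.ofReal_re,
      Matrix.diagonal_apply_eq, Function.comp_apply] at h2
    rw [show ((RCLike.ofReal (hC.eigenvalues j) : ℂ)).re = hC.eigenvalues j
      from Complex.ofReal_re _] at h2
    rw [← h2]
    simp [Complex.real_smul, Complex.mul_re]
  calc ∑ j, |hC.eigenvalues j| ^ α
      ≤ ∑ j, (t * |((star (U : Matrix (Fin n) (Fin n) ℂ) * A * (U : Matrix (Fin n) (Fin n) ℂ)) j j).re| ^ α
          + (1 - t) * |((star (U : Matrix (Fin n) (Fin n) ℂ) * B * (U : Matrix (Fin n) (Fin n) ℂ)) j j).re| ^ α) := by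
        refine Finset.sum_le_sum fun j _ => ?_
        rw [hlam j]
        exact hf.2 (Set.mem_univ _) (Set.mem_univ _) ht0 (by linarith) (by ring)
    _ = t * ∑ j, |((star (U : Matrix (Fin n) (Fin n) ℂ) * A * (U : Matrix (Fin n) (Fin n) ℂ)) j j).re| ^ α
        + (1 - t) * ∑ j, |((star (U : Matrix (Fin n) (Fin n) ℂ) * B * (U : Matrix (Fin n) (Fin n) ℂ)) j j).re| ^ α := by
        rw [Finset.sum_add_distrib, Finset.mul_sum, Finset.mul_sum]
    _ ≤ t * ∑ j, |hA.eigenvalues j| ^ α + (1 - t) * ∑ j, |hB.eigenvalues j| ^ α := by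
        exact add_le_add (mul_le_mul_of_nonneg_left (peierls hf hA U) ht0)
          (mul_le_mul_of_nonneg_left (peierls hf hB U) (by linarith))
end

section
/- Let μ₁ ≥ … ≥ μₙ ≥ 0 and λ₁ ≥ … ≥ λₙ > 0 be nonnegative reals. Suppose there exists k with μᵢ = λᵢ for i < k and μ_k > λ_k, and suppose Σ_{i=k}^n μᵢ^α = Σ_{i=k}^n λᵢ^α for all α ≥ 1. Then for every α > 0, (μ_k/λ_k)^α ≤ n; deriving a contradiction since μ_k/λ_k > 1 forces (μ_k/λ_k)^α → ∞ as α → ∞. Hence no such k exists. -/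
open Finset

/-- Key quantitative step: if μᵢ = λᵢ for i < k, μ_k > λ_k > 0, and the tail
power sums agree for all α ≥ 1, we get (μ_k/λ_k)^α ≤ n for all α > 0,
a contradiction. Hence no such k exists. -/
theorem stmt_8 (n k : ℕ) (hk : k < n) (μ lam : ℕ → ℝ)
    (hμ : ∀ i j, i ≤ j → j < n → μ j ≤ μ i)
    (hlam : ∀ i j, i ≤ j → j < n → lam j ≤ lam i)
    (hμ0 : ∀ i < n, 0 ≤ μ i) (hlam0 : ∀ i < n, 0 < lam i)
    (heq : ∀ i < k, μ i = lam i) (hgt : lam k < μ k)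
    (hpow : ∀ α : ℝ, 1 ≤ α →
        ∑ i ∈ Ico k n, (μ i) ^ α = ∑ i ∈ Ico k n, (lam i) ^ α) :
    (∀ α : ℝ, 1 ≤ α → (μ k / lam k) ^ α ≤ (n : ℝ)) ∧ False := by
  have hlk : 0 < lam k := hlam0 k hk
  have hμk : 0 ≤ μ k := hμ0 k hk
  have key : ∀ α : ℝ, 1 ≤ α → (μ k / lam k) ^ α ≤ (n : ℝ) := by
    intro α hα
    have hmem : k ∈ Ico k n := mem_Ico.mpr ⟨le_rfl, hk⟩
    have h1 : (μ k) ^ α ≤ ∑ i ∈ Ico k n, (μ i) ^ α := by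
      apply Finset.single_le_sum (f := fun i => (μ i) ^ α) _ hmem
      intro i hi
      exact Real.rpow_nonneg (hμ0 i (mem_Ico.mp hi).2) α
    have h2 : ∑ i ∈ Ico k n, (lam i) ^ α ≤ ∑ i ∈ Ico k n, (lam k) ^ α := by
      apply Finset.sum_le_sum
      intro i hi
      obtain ⟨h1', h2'⟩ := mem_Ico.mp hi
      exact Real.rpow_le_rpow (le_of_lt (hlam0 i h2')) (hlam k i h1' h2')
        (le_trans zero_le_one hα)
    have h3 : ∑ i ∈ Ico k n, (lam k) ^ α = ((n - k : ℕ) : ℝ) * (lam k) ^ α := by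
      rw [Finset.sum_const, Nat.card_Ico, nsmul_eq_mul]
    have h4 : ((n - k : ℕ) : ℝ) ≤ (n : ℝ) := by
      exact_mod_cast Nat.sub_le n k
    have hlkα : 0 < (lam k) ^ α := Real.rpow_pos_of_pos hlk α
    have : (μ k) ^ α ≤ (n : ℝ) * (lam k) ^ α := by
      calc (μ k) ^ α ≤ ∑ i ∈ Ico k n, (μ i) ^ α := h1
        _ = ∑ i ∈ Ico k n, (lam i) ^ α := hpow α hα
        _ ≤ ((n - k : ℕ) : ℝ) * (lam k) ^ α := h2.trans_eq h3
        _ ≤ (n : ℝ) * (lam k) ^ α := by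
            exact mul_le_mul_of_nonneg_right h4 hlkα.le
    rw [Real.div_rpow hμk hlk.le, div_le_iff₀ hlkα]
    exact this
  refine ⟨key, ?_⟩
  set r := μ k / lam k with hr
  have hr1 : 1 < r := (one_lt_div hlk).mpr hgt
  obtain ⟨m, hm⟩ := pow_unbounded_of_one_lt (n : ℝ) hr1
  have hm1 : 1 ≤ m := by
    by_contra h
    push_neg at h
    interval_cases m
    simp at hm
    have : (1 : ℝ) ≤ (n : ℝ) := by exact_mod_cast Nat.one_le_of_lt hk
    linarith
  have := key (m : ℝ) (by exact_mod_cast hm1)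
  rw [Real.rpow_natCast] at this
  linarith
end

section
/- Let a be an n×n Hermitian matrix with eigenvalues λ₁ ≥ λ₂ ≥ … ≥ λₙ (with multiplicity), and let π be an n×n Hermitian matrix with π = π² of rank r. Then Tr(aπ) ≤ Σ_{i≤r} λᵢ. -/
open Matrix Finset

lemma kyfan_aux {n : ℕ} (μ t : Fin n → ℝ) (hmono : ∀ i j : Fin n, i ≤ j → μ j ≤ μ i)
    (ht0 : ∀ i, 0 ≤ t i) (ht1 : ∀ i, t i ≤ 1) (r : ℕ) (hsum : ∑ i, t i = r) :
    ∑ i, μ i * t i ≤ ∑ i ∈ univ.filter (fun i : Fin n => (i : ℕ) < r), μ i := by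
  by_cases hrn : r < n
  · set c : ℝ := μ ⟨r, hrn⟩ with hc
    have hcard : (univ.filter (fun i : Fin n => (i : ℕ) < r)).card = r := by
      have : univ.filter (fun i : Fin n => (i : ℕ) < r) = Finset.Iio (⟨r, hrn⟩ : Fin n) := by
        ext i
        simp [Finset.mem_Iio, Fin.lt_def]
      rw [this, Fin.card_Iio]
    have key : ∑ i, (μ i - c) * (t i - if (i : ℕ) < r then 1 else 0) ≤ 0 := by
      apply Finset.sum_nonpos
      intro i _
      by_cases hi : (i : ℕ) < r
      · simp only [hi, if_true]
        have h1 : c ≤ μ i := hmono i ⟨r, hrn⟩ (by exact Fin.le_def.mpr hi.le)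
        have h2 : t i - 1 ≤ 0 := by linarith [ht1 i]
        exact mul_nonpos_of_nonneg_of_nonpos (by linarith) h2
      · simp only [hi, if_false]
        have h1 : μ i ≤ c := hmono ⟨r, hrn⟩ i (Fin.le_def.mpr (not_lt.mp hi))
        have h2 : 0 ≤ t i - 0 := by linarith [ht0 i]
        exact mul_nonpos_of_nonpos_of_nonneg (by linarith) h2
    have expand : ∑ i, (μ i - c) * (t i - if (i : ℕ) < r then 1 else 0)
        = ∑ i, μ i * t i - ∑ i ∈ univ.filter (fun i : Fin n => (i : ℕ) < r), μ i
          - c * (∑ i, t i) + c * r := by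
      have h1 : ∑ i, μ i * (if (i : ℕ) < r then (1:ℝ) else 0)
          = ∑ i ∈ univ.filter (fun i : Fin n => (i : ℕ) < r), μ i := by
        rw [Finset.sum_filter]
        congr 1; ext i; by_cases hi : (i : ℕ) < r <;> simp [hi]
      have h2 : ∑ i : Fin n, c * (if (i : ℕ) < r then (1:ℝ) else 0) = c * r := by
        rw [← Finset.mul_sum, Finset.sum_boole, hcard]
      calc ∑ i, (μ i - c) * (t i - if (i : ℕ) < r then 1 else 0)
          = ∑ i, (μ i * t i - μ i * (if (i : ℕ) < r then (1:ℝ) else 0)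
              - c * t i + c * (if (i : ℕ) < r then (1:ℝ) else 0)) := by
            congr 1; ext i; ring
        _ = _ := by
            rw [Finset.sum_add_distrib, Finset.sum_sub_distrib, Finset.sum_sub_distrib,
              h1, h2, Finset.mul_sum]
    rw [expand, hsum] at key
    linarith
  · -- r ≥ n : then all t i = 1 and the filter is univ
    push_neg at hrn
    have hfil : univ.filter (fun i : Fin n => (i : ℕ) < r) = (univ : Finset (Fin n)) := by
      apply Finset.filter_true_of_mem
      intro i _
      exact lt_of_lt_of_le i.2 hrn
    have hle : (r : ℝ) ≤ n := by
      rw [← hsum]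
      calc ∑ i, t i ≤ ∑ _i : Fin n, (1:ℝ) := Finset.sum_le_sum (fun i _ => ht1 i)
        _ = n := by simp
    have hrn' : r = n := le_antisymm (by exact_mod_cast hle) hrn
    have hzero : ∑ i, (1 - t i) = 0 := by
      rw [Finset.sum_sub_distrib, hsum, hrn']
      simp
    have ht1' : ∀ i : Fin n, t i = 1 := by
      intro i
      have := (Finset.sum_eq_zero_iff_of_nonneg (fun j _ => by linarith [ht1 j])).mp hzero i
        (mem_univ i)
      linarith [this]
    rw [hfil]
    apply le_of_eq
    congr 1; ext i; rw [ht1' i, mul_one]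

/-- Ky Fan maximum principle: for a Hermitian matrix a with decreasing
eigenvalues λ and a rank-r orthogonal projection π, Tr(aπ) ≤ Σ_{i<r} λᵢ. -/
theorem stmt_9 {n : ℕ} (a π : Matrix (Fin n) (Fin n) ℂ)
    (ha : a.IsHermitian) (hπ1 : πᴴ = π) (hπ2 : π * π = π)
    (r : ℕ) (hr : Matrix.trace π = (r : ℂ))
    (lam : Fin n → ℝ) (hmono : ∀ i j : Fin n, i ≤ j → lam j ≤ lam i)
    (hspec : ∃ σ : Equiv.Perm (Fin n), lam = ha.eigenvalues ∘ σ) :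
    (Matrix.trace (a * π)).re ≤ ∑ i ∈ univ.filter (fun i : Fin n => (i : ℕ) < r), lam i := by
  obtain ⟨σ, hσ⟩ := hspec
  set U : Matrix (Fin n) (Fin n) ℂ := (ha.eigenvectorUnitary : Matrix (Fin n) (Fin n) ℂ) with hU
  have hUU : star U * U = 1 := Unitary.coe_star_mul_self ha.eigenvectorUnitary
  have hUU' : U * star U = 1 := Unitary.coe_mul_star_self ha.eigenvectorUnitary
  set q : Matrix (Fin n) (Fin n) ℂ := star U * π * U with hq
  have hqherm : qᴴ = q := by
    simp only [hq, Matrix.star_eq_conjTranspose, conjTranspose_mul,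
      conjTranspose_conjTranspose, hπ1, mul_assoc]
  have hqproj : q * q = q := by
    simp only [hq]
    calc star U * π * U * (star U * π * U)
        = star U * π * (U * star U) * π * U := by noncomm_ring
      _ = star U * π * π * U := by rw [hUU']; noncomm_ring
      _ = star U * (π * π) * U := by noncomm_ring
      _ = star U * π * U := by rw [hπ2]
  -- diagonal entries of q
  set t : Fin n → ℝ := fun i => (q i i).re with htdef
  have hproj_diag : ∀ (p : Matrix (Fin n) (Fin n) ℂ), pᴴ = p → p * p = p →
      ∀ i, 0 ≤ (p i i).re := by
    intro p hp1 hp2 i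
    have hsym : ∀ i j, p i j = star (p j i) := by
      intro i j
      conv_lhs => rw [← hp1]
      simp [Matrix.conjTranspose_apply]
    have : p i i = ∑ j, (star (p j i)) * p j i := by
      conv_lhs => rw [← hp2]
      rw [Matrix.mul_apply]
      congr 1; ext j
      rw [hsym i j]
    rw [this]
    rw [Complex.re_sum]
    apply Finset.sum_nonneg
    intro j _
    simp [Complex.mul_re]
    nlinarith [(p j i).re, (p j i).im]
  have ht0 : ∀ i, 0 ≤ t i := hproj_diag q hqherm hqproj
  have ht1 : ∀ i, t i ≤ 1 := by
    intro i
    have hc1 : (1 - q)ᴴ = 1 - q := by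
      rw [Matrix.conjTranspose_sub, hqherm]; simp
    have hc2 : (1 - q) * (1 - q) = 1 - q := by
      rw [sub_mul, mul_sub, mul_sub, hqproj]
      simp
    have := hproj_diag (1 - q) hc1 hc2 i
    simp only [Matrix.sub_apply, Matrix.one_apply_eq, Complex.sub_re, Complex.one_re] at this
    simpa [htdef] using by linarith
  have htsum : ∑ i, t i = r := by
    have : Matrix.trace q = (r : ℂ) := by
      rw [hq, Matrix.trace_mul_cycle, hUU', one_mul]
      exact hr
    have := congrArg Complex.re this
    simpa [Matrix.trace, Matrix.diag, Complex.re_sum, htdef] using this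
  -- trace computation
  have htrace : (Matrix.trace (a * π)).re = ∑ i, ha.eigenvalues i * t i := by
    have hspec' := ha.spectral_theorem
    rw [Unitary.conjStarAlgAut_apply, ← hU] at hspec'
    have h1 : Matrix.trace (a * π)
        = Matrix.trace (Matrix.diagonal (RCLike.ofReal ∘ ha.eigenvalues) * q) := by
      conv_lhs => rw [hspec']
      have e1 : U * Matrix.diagonal (RCLike.ofReal ∘ ha.eigenvalues) * star U * π
          = U * (Matrix.diagonal (RCLike.ofReal ∘ ha.eigenvalues) * (star U * π)) := by
        noncomm_ring
      rw [e1, Matrix.trace_mul_comm, hq]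
      congr 1
      noncomm_ring
    rw [h1]
    have h2 : Matrix.trace (Matrix.diagonal (RCLike.ofReal ∘ ha.eigenvalues) * q)
        = ∑ i, (ha.eigenvalues i : ℂ) * q i i := by
      simp [Matrix.trace, Matrix.diag, Matrix.diagonal_mul]
    rw [h2, Complex.re_sum]
    congr 1; ext i
    simp [htdef, Complex.mul_re, Complex.ofReal_re, Complex.ofReal_im]
  rw [htrace]
  have hre : ∑ i, ha.eigenvalues i * t i = ∑ i, lam i * t (σ i) := by
    rw [hσ]
    exact (Equiv.sum_comp σ (fun i => ha.eigenvalues i * t i)).symm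
  rw [hre]
  apply kyfan_aux lam (fun i => t (σ i)) hmono (fun i => ht0 _) (fun i => ht1 _) r
  rw [Equiv.sum_comp σ t, htsum]
end

section
/- Let a be an n×n Hermitian matrix with eigenvalues λ₁ ≥ … ≥ λₙ and let π be a rank-r orthogonal projection. Then Tr(aπ) ≥ Σ_{i>n-r} λᵢ, i.e. the trace is at least the sum of the r smallest eigenvalues. -/
open Matrix Finset

lemma keyA {n r : ℕ} (lam t : Fin n → ℝ)
    (hmono : ∀ i j : Fin n, i ≤ j → lam j ≤ lam i)
    (ht0 : ∀ i, 0 ≤ t i) (ht1 : ∀ i, t i ≤ 1) (hsum : ∑ i, t i = (r : ℝ)) :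
    ∑ i ∈ univ.filter (fun i : Fin n => n - r ≤ (i : ℕ)), lam i ≤ ∑ i, lam i * t i := by
  have hrn : r ≤ n := by
    have : (r : ℝ) ≤ (n : ℝ) := by
      rw [← hsum]
      calc ∑ i, t i ≤ ∑ _i : Fin n, (1 : ℝ) := Finset.sum_le_sum fun i _ => ht1 i
        _ = n := by simp
    exact_mod_cast this
  rcases Nat.eq_zero_or_pos r with hr0 | hrpos
  · subst hr0
    have ht : ∀ i : Fin n, t i = 0 := by
      intro i
      have := (Finset.sum_eq_zero_iff_of_nonneg (fun i _ => ht0 i)).mp (by simpa using hsum)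
      exact this i (mem_univ i)
    have hfilter : (univ.filter fun i : Fin n => n - 0 ≤ (i : ℕ)) = ∅ := by
      apply Finset.filter_false_of_mem
      intro i _
      simp only [Nat.sub_zero]
      omega
    rw [hfilter]
    simp [ht]
  · have hn : 0 < n := lt_of_lt_of_le hrpos hrn
    set k : Fin n := ⟨n - r, by omega⟩ with hk
    set s : Fin n → ℝ := fun i => if n - r ≤ (i : ℕ) then 1 else 0 with hs
    have hfilter_eq : (univ.filter fun i : Fin n => n - r ≤ (i : ℕ)) = Finset.Ici k := by
      ext i
      simp [Finset.mem_Ici, hk, Fin.le_def]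
    have hcard : ((univ : Finset (Fin n)).filter fun i : Fin n => n - r ≤ (i : ℕ)).card = r := by
      rw [hfilter_eq, Fin.card_Ici]
      simp only [hk]
      omega
    have hsums : ∑ i, s i = (r : ℝ) := by
      rw [hs, Finset.sum_boole, hcard]
    have hterm : ∀ i : Fin n, 0 ≤ (lam i - lam k) * (t i - s i) := by
      intro i
      by_cases h : n - r ≤ (i : ℕ)
      · have hki : k ≤ i := by simpa [hk, Fin.le_def] using h
        have h1 : lam i - lam k ≤ 0 := sub_nonpos.mpr (hmono k i hki)
        have h2 : t i - s i ≤ 0 := by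
          show t i - (if n - r ≤ (i : ℕ) then (1:ℝ) else 0) ≤ 0
          rw [if_pos h]; linarith [ht1 i]
        have := mul_nonneg (neg_nonneg.mpr h1) (neg_nonneg.mpr h2)
        rwa [neg_mul_neg] at this
      · have hik : i ≤ k := by simp [hk, Fin.le_def]; omega
        have h1 : 0 ≤ lam i - lam k := sub_nonneg.mpr (hmono i k hik)
        have h2 : 0 ≤ t i - s i := by
          show 0 ≤ t i - (if n - r ≤ (i : ℕ) then (1:ℝ) else 0)
          rw [if_neg h]; linarith [ht0 i]
        exact mul_nonneg h1 h2
    have hfs : ∑ i ∈ univ.filter (fun i : Fin n => n - r ≤ (i : ℕ)), lam i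
        = ∑ i, lam i * s i := by
      rw [Finset.sum_filter]
      exact Finset.sum_congr rfl fun i _ => by simp [hs, mul_ite]
    have hexp : ∑ i, (lam i - lam k) * (t i - s i)
        = (∑ i, lam i * t i) - (∑ i, lam i * s i)
          - lam k * ((∑ i, t i) - (∑ i, s i)) := by
      simp only [sub_mul, mul_sub, Finset.sum_sub_distrib, Finset.mul_sum]
      ring
    have hpos : 0 ≤ ∑ i, (lam i - lam k) * (t i - s i) :=
      Finset.sum_nonneg fun i _ => hterm i
    rw [hexp, hsum, hsums] at hpos
    rw [hfs]
    linarith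

/-- Dual Ky Fan minimum principle: Tr(aπ) is at least the sum of the r
smallest eigenvalues of the Hermitian matrix a. -/
theorem stmt_10 {n : ℕ} (a π : Matrix (Fin n) (Fin n) ℂ)
    (ha : a.IsHermitian) (hπ1 : πᴴ = π) (hπ2 : π * π = π)
    (r : ℕ) (hr : Matrix.trace π = (r : ℂ))
    (lam : Fin n → ℝ) (hmono : ∀ i j : Fin n, i ≤ j → lam j ≤ lam i)
    (hspec : ∃ σ : Equiv.Perm (Fin n), lam = ha.eigenvalues ∘ σ) :
    ∑ i ∈ univ.filter (fun i : Fin n => n - r ≤ (i : ℕ)), lam i ≤ (Matrix.trace (a * π)).re := by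
  obtain ⟨σ, hσ⟩ := hspec
  set U : Matrix (Fin n) (Fin n) ℂ := (ha.eigenvectorUnitary : Matrix (Fin n) (Fin n) ℂ) with hU
  have hU1 : U * star U = 1 := (Matrix.mem_unitaryGroup_iff).mp ha.eigenvectorUnitary.2
  have hU2 : star U * U = 1 := (Matrix.mem_unitaryGroup_iff').mp ha.eigenvectorUnitary.2
  set p : Matrix (Fin n) (Fin n) ℂ := star U * π * U with hp
  have hp1 : pᴴ = p := by
    rw [hp, Matrix.star_eq_conjTranspose]
    simp [Matrix.conjTranspose_mul, hπ1, mul_assoc]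
  have hp2 : p * p = p := by
    rw [hp]
    calc star U * π * U * (star U * π * U)
        = star U * π * (U * star U) * π * U := by noncomm_ring
      _ = star U * (π * π) * U := by rw [hU1]; noncomm_ring
      _ = star U * π * U := by rw [hπ2]
  have htrp : Matrix.trace p = (r : ℂ) := by
    rw [hp, Matrix.trace_mul_cycle, hU1, one_mul, hr]
  -- diagonal entries
  set t : Fin n → ℝ := fun i => (p i i).re with htdef
  have hdiag : ∀ i, p i i = ((∑ j, Complex.normSq (p i j) : ℝ) : ℂ) := by
    intro i
    conv_lhs => rw [← hp2]
    rw [Matrix.mul_apply]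
    push_cast
    apply Finset.sum_congr rfl
    intro j _
    have : p j i = star (p i j) := by
      conv_lhs => rw [← hp1]
      rfl
    rw [this, Complex.star_def, Complex.mul_conj]
  have ht0 : ∀ i, 0 ≤ t i := by
    intro i
    rw [htdef]
    simp only [hdiag i, Complex.ofReal_re]
    exact Finset.sum_nonneg fun j _ => Complex.normSq_nonneg _
  have htim : ∀ i, (p i i).im = 0 := by
    intro i
    rw [hdiag i]
    simp
  have ht1 : ∀ i, t i ≤ 1 := by
    intro i
    have h1 : (t i) ^ 2 ≤ t i := by
      have : Complex.normSq (p i i) ≤ ∑ j, Complex.normSq (p i j) :=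
        Finset.single_le_sum (fun j _ => Complex.normSq_nonneg _) (mem_univ i)
      have h2 : Complex.normSq (p i i) = (t i) ^ 2 := by
        rw [Complex.normSq_apply, htim i, htdef]
        ring
      have h3 : t i = ∑ j, Complex.normSq (p i j) := by
        rw [htdef]; simp only [hdiag i, Complex.ofReal_re]
      rw [← h2, h3]
      exact this
    nlinarith [ht0 i]
  have htsum : ∑ i, t i = (r : ℝ) := by
    have h := congrArg Complex.re htrp
    rw [Matrix.trace, Complex.re_sum] at h
    simpa using h
  -- trace computation
  have htrace : (Matrix.trace (a * π)).re = ∑ i, ha.eigenvalues i * t i := by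
    have key : Matrix.trace (a * π)
        = Matrix.trace (diagonal (RCLike.ofReal ∘ ha.eigenvalues) * p) := by
      conv_lhs => rw [ha.spectral_theorem, Unitary.conjStarAlgAut_apply]
      have h1 : (U * diagonal (RCLike.ofReal ∘ ha.eigenvalues) * star U) * π
          = U * (diagonal (RCLike.ofReal ∘ ha.eigenvalues) * star U * π) := by
        noncomm_ring
      rw [hU] at h1
      rw [h1, Matrix.trace_mul_comm]
      refine congrArg Matrix.trace ?_
      rw [hp, hU]
      noncomm_ring
    rw [key, Matrix.trace, Complex.re_sum]
    refine Finset.sum_congr rfl fun i _ => ?_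
    rw [Matrix.diag_apply, Matrix.diagonal_mul]
    have hco : (RCLike.ofReal ∘ ha.eigenvalues) i = ((ha.eigenvalues i : ℝ) : ℂ) := rfl
    rw [hco, Complex.re_ofReal_mul]
  rw [htrace]
  have hre : ∑ i, ha.eigenvalues i * t i = ∑ i, lam i * t (σ i) := by
    rw [← Equiv.sum_comp σ (fun i => ha.eigenvalues i * t i)]
    apply Finset.sum_congr rfl
    intro i _
    rw [hσ]
    rfl
  rw [hre]
  exact keyA lam (t ∘ σ) hmono (fun i => ht0 _) (fun i => ht1 _)
    (by simp only [Function.comp_apply]; rw [Equiv.sum_comp σ t]; exact htsum)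
end
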